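/- Let L₁ be a real symmetric M×M matrix with eigenvalues λ₁, …, λ_M and a corresponding orthonormal family of real eigenvectors p₁, …, p_M. Let a, b ∈ ℝ, ω ∈ ℂ \ {0}, and set λ(ω) = a − b(ω + ω⁻¹); assume λ(ω) is not an eigenvalue of L₁ and write R(λ(ω)) = (L₁ − λ(ω)I)⁻¹. Then R(λ(ω))* − R(λ(ω)) = b·(ω̄ − ω)·(|ω|^{−2} − 1)·Δ₁(ω), where Δ₁(ω) = ∑_{l=1}^{M} p_l p_lᵀ / |λ_l − λ(ω)|², and moreover Δ₁(ω) is a positive semidefinite Hermitian matrix. -/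

import Mathlib

open Complex Matrix
open scoped ComplexOrder

theorem resolvent_antisymmetric_part
    (M : ℕ) (L₁ : Matrix (Fin M) (Fin M) ℝ) (hsym : L₁.IsSymm)
    (lamv : Fin M → ℝ) (p : Fin M → Fin M → ℝ)
    (heig : ∀ l, L₁.mulVec (p l) = lamv l • p l)
    (hortho : ∀ l l', p l ⬝ᵥ p l' = if l = l' then 1 else 0)
    (a b : ℝ) (ω : ℂ) (hω : ω ≠ 0)
    (hreg : ∀ l, (lamv l : ℂ) ≠ a - b * (ω + ω⁻¹))
    (R : Matrix (Fin M) (Fin M) ℂ)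
    (hR : R = ((L₁.map fun t => (t : ℂ)) - (a - b * (ω + ω⁻¹)) • (1 : Matrix (Fin M) (Fin M) ℂ))⁻¹)
    (Δ₁ : Matrix (Fin M) (Fin M) ℂ)
    (hΔ₁ : Δ₁ = ∑ l : Fin M, Matrix.of fun i j =>
      ((p l i * p l j : ℝ) : ℂ) / (((‖(lamv l : ℂ) - (a - b * (ω + ω⁻¹))‖ : ℝ) : ℂ) ^ 2)) :
    Rᴴ - R = ((b : ℂ) * ((starRingEnd ℂ) ω - ω) * ((((‖ω‖ : ℝ) : ℂ) ^ 2)⁻¹ - 1)) • Δ₁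
    ∧ Δ₁.PosSemidef := by
  have hconjω : (starRingEnd ℂ) ω ≠ 0 := by simpa using hω
  set lam : ℂ := (a : ℂ) - (b : ℂ) * (ω + ω⁻¹) with hlam
  have hz : ∀ l, (lamv l : ℂ) - lam ≠ 0 := fun l => sub_ne_zero.mpr (hreg l)
  have hzc : ∀ l, (starRingEnd ℂ) ((lamv l : ℂ) - lam) ≠ 0 := fun l =>
    star_ne_zero.mpr (hz l)
  -- eigen equation over ℂ
  have hq : ∀ l i, ∑ k, (L₁ i k : ℂ) * (p l k : ℂ) = (lamv l : ℂ) * (p l i : ℂ) := by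
    intro l i
    have h := congrFun (heig l) i
    simp only [Matrix.mulVec, dotProduct, Pi.smul_apply, smul_eq_mul] at h
    calc ∑ k, (L₁ i k : ℂ) * (p l k : ℂ) = ((∑ k, L₁ i k * p l k : ℝ) : ℂ) := by
          push_cast; rfl
      _ = ((lamv l * p l i : ℝ) : ℂ) := by rw [h]
      _ = _ := by push_cast; rfl
  -- completeness of the eigenbasis
  have hcomp : ∀ i j, ∑ l, (p l i : ℂ) * (p l j : ℂ) = if i = j then 1 else 0 := by
    have hP : (Matrix.of p) * (Matrix.of p)ᵀ = 1 := by
      ext l l'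
      simpa [Matrix.mul_apply, dotProduct, Matrix.one_apply] using hortho l l'
    have hP' : (Matrix.of p)ᵀ * (Matrix.of p) = 1 := mul_eq_one_comm.mp hP
    intro i j
    have h2 := congrFun (congrFun hP' i) j
    simp only [Matrix.mul_apply, Matrix.transpose_apply, Matrix.of_apply,
      Matrix.one_apply] at h2
    calc ∑ l, (p l i : ℂ) * (p l j : ℂ) = ((∑ l, p l i * p l j : ℝ) : ℂ) := by
          push_cast; rfl
      _ = _ := by rw [h2]; split <;> simp
  set A : Matrix (Fin M) (Fin M) ℂ :=
    (L₁.map fun t => (t : ℂ)) - lam • (1 : Matrix (Fin M) (Fin M) ℂ) with hA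
  set S : Matrix (Fin M) (Fin M) ℂ :=
    ∑ l, Matrix.of (fun i j => ((lamv l : ℂ) - lam)⁻¹ * ((p l i : ℂ) * (p l j : ℂ))) with hS
  have hAq : ∀ l i, ∑ k, A i k * (p l k : ℂ) = ((lamv l : ℂ) - lam) * (p l i : ℂ) := by
    intro l i
    have hterm : ∀ k, A i k * (p l k : ℂ)
        = (L₁ i k : ℂ) * (p l k : ℂ) - (if i = k then lam * (p l k : ℂ) else 0) := by
      intro k
      simp only [hA, Matrix.sub_apply, Matrix.map_apply, Matrix.smul_apply, Matrix.one_apply,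
        smul_eq_mul]
      split <;> ring
    rw [Finset.sum_congr rfl fun k _ => hterm k, Finset.sum_sub_distrib, hq l i,
      Finset.sum_ite_eq]
    simp only [Finset.mem_univ, if_true]
    ring
  have hAS : A * S = 1 := by
    ext i j
    rw [Matrix.mul_apply]
    have h1 : ∀ k, A i k * S k j
        = ∑ l, (((lamv l : ℂ) - lam)⁻¹ * (p l j : ℂ) * (A i k * (p l k : ℂ))) := by
      intro k
      rw [hS]
      simp only [Matrix.sum_apply, Matrix.of_apply, Finset.mul_sum]
      exact Finset.sum_congr rfl fun l _ => by ring
    rw [Finset.sum_congr rfl fun k _ => h1 k, Finset.sum_comm]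
    have h2 : ∀ l, (∑ k, (((lamv l : ℂ) - lam)⁻¹ * (p l j : ℂ) * (A i k * (p l k : ℂ))))
        = (p l i : ℂ) * (p l j : ℂ) := by
      intro l
      have : ∑ k, (((lamv l : ℂ) - lam)⁻¹ * (p l j : ℂ) * (A i k * (p l k : ℂ)))
          = ((lamv l : ℂ) - lam)⁻¹ * (p l j : ℂ) * ∑ k, A i k * (p l k : ℂ) := by
        rw [Finset.mul_sum]
      rw [this, hAq l i]
      have hzz : ((lamv l : ℂ) - lam)⁻¹ * ((lamv l : ℂ) - lam) = 1 := inv_mul_cancel₀ (hz l)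
      linear_combination ((p l i : ℂ) * (p l j : ℂ)) * hzz
    rw [Finset.sum_congr rfl fun l _ => h2 l, hcomp i j, Matrix.one_apply]
  have hRS : R = S := by rw [hR]; exact Matrix.inv_eq_right_inv hAS
  -- abs squared as z * conj z
  have habs2 : ∀ z : ℂ, ((‖z‖ : ℝ) : ℂ) ^ 2 = z * (starRingEnd ℂ) z := by
    intro z
    rw [← Complex.ofReal_pow, Complex.sq_norm, Complex.mul_conj]
  have hconjlam : (starRingEnd ℂ) lam
      = (a : ℂ) - (b : ℂ) * ((starRingEnd ℂ) ω + ((starRingEnd ℂ) ω)⁻¹) := by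
    simp [hlam, map_sub, _root_.map_mul, map_add, map_inv₀, Complex.conj_ofReal]
  have key : ∀ l, (starRingEnd ℂ) (((lamv l : ℂ) - lam)⁻¹) - ((lamv l : ℂ) - lam)⁻¹
      = ((b : ℂ) * ((starRingEnd ℂ) ω - ω) * ((((‖ω‖ : ℝ) : ℂ) ^ 2)⁻¹ - 1))
        * ((((‖(lamv l : ℂ) - lam‖ : ℝ) : ℂ)) ^ 2)⁻¹ := by
    intro l
    have hstep : ∀ u v : ℂ, u ≠ 0 → v ≠ 0 → v⁻¹ - u⁻¹ = (u - v) * (u * v)⁻¹ := by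
      intro u v hu hv
      rw [mul_inv, sub_mul, mul_inv_cancel_left₀ hu, mul_comm u⁻¹ v⁻¹,
        mul_inv_cancel_left₀ hv]
    have h2 := hstep ((lamv l : ℂ) - lam) ((starRingEnd ℂ) ((lamv l : ℂ) - lam)) (hz l) (hzc l)
    rw [map_inv₀, h2, habs2 ((lamv l : ℂ) - lam)]
    congr 1
    have h1 : (starRingEnd ℂ) ((lamv l : ℂ) - lam) = (lamv l : ℂ) - (starRingEnd ℂ) lam := by
      rw [map_sub, Complex.conj_ofReal]
    rw [h1, habs2 ω, hconjlam, hlam]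
    linear_combination (b : ℂ) * hstep ((starRingEnd ℂ) ω) ω hconjω hω
  refine ⟨?_, ?_⟩
  · rw [hRS, hΔ₁]
    ext i j
    simp only [Matrix.sub_apply, Matrix.conjTranspose_apply, hS, Matrix.sum_apply,
      Matrix.of_apply, Matrix.smul_apply, ← starRingEnd_apply, map_sum, smul_eq_mul,
      Finset.mul_sum, _root_.map_mul, Complex.conj_ofReal]
    rw [← Finset.sum_sub_distrib]
    refine Finset.sum_congr rfl fun l _ => ?_
    have hk := key l
    push_cast
    linear_combination ((p l i : ℂ) * (p l j : ℂ)) * hk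
  · rw [Matrix.posSemidef_iff_dotProduct_mulVec]; constructor
    · rw [hΔ₁]
      ext i j
      simp only [Matrix.conjTranspose_apply, Matrix.sum_apply, Matrix.of_apply,
        ← starRingEnd_apply, map_sum, map_div₀, _root_.map_mul, map_pow, Complex.conj_ofReal]
      refine Finset.sum_congr rfl fun l _ => ?_
      push_cast
      ring
    · intro x
      have hform : star x ⬝ᵥ Δ₁ *ᵥ x
          = ∑ l, (starRingEnd ℂ) (∑ j, (p l j : ℂ) * x j) * (∑ j, (p l j : ℂ) * x j)
              / (((‖(lamv l : ℂ) - lam‖ : ℝ) : ℂ) ^ 2) := by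
        calc star x ⬝ᵥ Δ₁ *ᵥ x
            = ∑ i, ∑ l, ∑ j, (starRingEnd ℂ) (x i)
                * (((p l i * p l j : ℝ) : ℂ)
                    / (((‖(lamv l : ℂ) - lam‖ : ℝ) : ℂ) ^ 2) * x j) := by
              rw [hΔ₁]
              simp only [dotProduct, Matrix.mulVec, Matrix.sum_apply, Matrix.of_apply,
                Pi.star_apply, ← starRingEnd_apply, Finset.sum_mul, Finset.mul_sum]
              exact Finset.sum_congr rfl fun i _ => Finset.sum_comm
          _ = ∑ l, ∑ i, ∑ j, (starRingEnd ℂ) (x i)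
                * (((p l i * p l j : ℝ) : ℂ)
                    / (((‖(lamv l : ℂ) - lam‖ : ℝ) : ℂ) ^ 2) * x j) :=
              Finset.sum_comm
          _ = _ := by
              refine Finset.sum_congr rfl fun l _ => ?_
              rw [map_sum]
              simp only [_root_.map_mul, Complex.conj_ofReal]
              rw [Finset.sum_mul, Finset.sum_div]
              refine Finset.sum_congr rfl fun i _ => ?_
              rw [Finset.mul_sum, Finset.sum_div]
              refine Finset.sum_congr rfl fun j _ => ?_
              push_cast
              ring
      rw [hform]
      refine Finset.sum_nonneg fun l _ => ?_
      rw [mul_comm, Complex.mul_conj, ← Complex.ofReal_pow, ← Complex.ofReal_div,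
        Complex.zero_le_real]
      exact div_nonneg (Complex.normSq_nonneg _) (sq_nonneg _)
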